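/- A Motzkin tree X is uniquely closable (exactly one closed de Bruijn lambda term has X as its skeleton) if and only if either X = l(Y) where Y is a Motzkin tree containing no unary node l, or X = a(Y,Z) where both Y and Z are uniquely closable. (This inductive characterization is the context-free grammar generating exactly the uniquely closable skeletons.) -/
import Mathlib


/-- Motzkin trees (binary-unary trees): leaf `v`, unary `l`, binary `a`. -/
inductive Mot : Type
  | v : Mot
  | l : Mot → Mot
  | a : Mot → Mot → Mot
deriving DecidableEq

/-- Lambda terms in de Bruijn form. -/
inductive Lam : Type
  | v : Nat → Lam
  | l : Lam → Lam
  | a : Lam → Lam → Lam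
deriving DecidableEq

/-- `t` is closed at depth `d`. -/
def Lam.closedAt : Lam → Nat → Prop
  | .v i, d => i < d
  | .l t, d => t.closedAt (d + 1)
  | .a s t, d => s.closedAt d ∧ t.closedAt d

/-- The Motzkin-tree skeleton of a de Bruijn term. -/
def Lam.skel : Lam → Mot
  | .v _ => .v
  | .l t => .l t.skel
  | .a s t => .a s.skel t.skel

/-- A Motzkin tree is uniquely closable if exactly one closed term has it as skeleton. -/
def Mot.UniquelyClosable (X : Mot) : Prop := ∃! t : Lam, t.closedAt 0 ∧ t.skel = X

/-- A Motzkin tree contains no unary node `l`. -/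
def Mot.LFree : Mot → Prop
  | .v => True
  | .l _ => False
  | .a s t => s.LFree ∧ t.LFree

def Mot.fill : Mot → Nat → Lam
  | .v, i => .v i
  | .l Y, i => .l (Y.fill i)
  | .a Y Z, i => .a (Y.fill i) (Z.fill i)

lemma fill_skel (X : Mot) (i : Nat) : (X.fill i).skel = X := by
  induction X <;> simp [Mot.fill, Lam.skel, *]

lemma fill_closed (X : Mot) {i d : Nat} (h : i < d) : (X.fill i).closedAt d := by
  induction X generalizing d with
  | v => exact h
  | l Y ih => exact ih (Nat.lt_succ_of_lt h)
  | a Y Z ih1 ih2 => exact ⟨ih1 h, ih2 h⟩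

lemma fill_inj (X : Mot) {i j : Nat} (h : X.fill i = X.fill j) : i = j := by
  induction X with
  | v => simpa [Mot.fill] using h
  | l Y ih => exact ih (by simpa [Mot.fill] using h)
  | a Y Z ih1 ih2 =>
      simp only [Mot.fill, Lam.a.injEq] at h
      exact ih1 h.1

def UCat (X : Mot) (d : Nat) : Prop := ∃! t : Lam, t.closedAt d ∧ t.skel = X

lemma not_UCat_ge2 (X : Mot) {d : Nat} (h : 2 ≤ d) : ¬ UCat X d := by
  rintro ⟨t, -, hu⟩
  have h0 := hu (X.fill 0) ⟨fill_closed X (by omega), fill_skel X 0⟩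
  have h1 := hu (X.fill 1) ⟨fill_closed X (by omega), fill_skel X 1⟩
  exact absurd (fill_inj X (h0.trans h1.symm)) (by omega)

lemma UCat_l (Y : Mot) (d : Nat) : UCat (.l Y) d ↔ UCat Y (d + 1) := by
  constructor
  · rintro ⟨t, ⟨hc, hs⟩, hu⟩
    cases t with
    | v i => simp [Lam.skel] at hs
    | a s u => simp [Lam.skel] at hs
    | l t =>
        refine ⟨t, ⟨hc, by simpa [Lam.skel] using hs⟩, ?_⟩
        intro s ⟨hsc, hss⟩
        have := hu (.l s) ⟨hsc, by simp [Lam.skel, hss]⟩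
        simpa using this
  · rintro ⟨t, ⟨hc, hs⟩, hu⟩
    refine ⟨.l t, ⟨hc, by simp [Lam.skel, hs]⟩, ?_⟩
    rintro s ⟨hsc, hss⟩
    cases s with
    | v i => simp [Lam.skel] at hss
    | a s u => simp [Lam.skel] at hss
    | l s =>
        simp only [Lam.skel, Mot.l.injEq] at hss
        simp [hu s ⟨hsc, hss⟩]

lemma UCat_a (Y Z : Mot) (d : Nat) : UCat (.a Y Z) d ↔ UCat Y d ∧ UCat Z d := by
  constructor
  · rintro ⟨t, ⟨hc, hs⟩, hu⟩
    cases t with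
    | v i => simp [Lam.skel] at hs
    | l t => simp [Lam.skel] at hs
    | a s u =>
        simp only [Lam.skel, Mot.a.injEq] at hs
        obtain ⟨hc1, hc2⟩ := hc
        constructor
        · refine ⟨s, ⟨hc1, hs.1⟩, ?_⟩
          intro s' ⟨h1, h2⟩
          have := hu (.a s' u) ⟨⟨h1, hc2⟩, by simp [Lam.skel, h2, hs.2]⟩
          simp only [Lam.a.injEq] at this
          exact this.1
        · refine ⟨u, ⟨hc2, hs.2⟩, ?_⟩
          intro u' ⟨h1, h2⟩
          have := hu (.a s u') ⟨⟨hc1, h1⟩, by simp [Lam.skel, h2, hs.1]⟩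
          simp only [Lam.a.injEq] at this
          exact this.2
  · rintro ⟨⟨s, ⟨hsc, hss⟩, hsu⟩, ⟨u, ⟨huc, hus⟩, huu⟩⟩
    refine ⟨.a s u, ⟨⟨hsc, huc⟩, by simp [Lam.skel, hss, hus]⟩, ?_⟩
    rintro t ⟨hc, hs⟩
    cases t with
    | v i => simp [Lam.skel] at hs
    | l t => simp [Lam.skel] at hs
    | a s' u' =>
        simp only [Lam.skel, Mot.a.injEq] at hs
        simp [hsu s' ⟨hc.1, hs.1⟩, huu u' ⟨hc.2, hs.2⟩]

lemma UCat1_iff_LFree (X : Mot) : UCat X 1 ↔ X.LFree := by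
  induction X with
  | v =>
      simp only [Mot.LFree, iff_true]
      refine ⟨.v 0, ⟨Nat.zero_lt_one, rfl⟩, ?_⟩
      rintro t ⟨hc, hs⟩
      cases t with
      | v i => simp only [Lam.closedAt] at hc; have hi : i = 0 := Nat.lt_one_iff.mp hc; exact congrArg Lam.v hi
      | l t => simp [Lam.skel] at hs
      | a s u => simp [Lam.skel] at hs
  | l Y ih =>
      simp only [Mot.LFree, iff_false, UCat_l]
      exact not_UCat_ge2 Y le_rfl
  | a Y Z ih1 ih2 => simp [UCat_a, Mot.LFree, ih1, ih2]

/-- Grammar for uniquely closable skeletons: `X` is uniquely closable iff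
`X = l(Y)` with `Y` containing no `l`, or `X = a(Y,Z)` with both parts uniquely closable. -/
theorem stmt5 (X : Mot) :
    X.UniquelyClosable ↔
      (∃ Y : Mot, X = .l Y ∧ Y.LFree) ∨
      (∃ Y Z : Mot, X = .a Y Z ∧ Y.UniquelyClosable ∧ Z.UniquelyClosable) := by
  have hUC : ∀ W : Mot, W.UniquelyClosable ↔ UCat W 0 := fun _ => Iff.rfl
  cases X with
  | v =>
      simp only [hUC]
      constructor
      · rintro ⟨t, ⟨hc, hs⟩, -⟩
        cases t with
        | v i => simp only [Lam.closedAt] at hc; omega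
        | l t => simp [Lam.skel] at hs
        | a s u => simp [Lam.skel] at hs
      · rintro (⟨Y, h, -⟩ | ⟨Y, Z, h, -⟩) <;> cases h
  | l Y =>
      rw [hUC, UCat_l, UCat1_iff_LFree]
      constructor
      · intro h; exact Or.inl ⟨Y, rfl, h⟩
      · rintro (⟨Y', h, hf⟩ | ⟨Y', Z', h, -⟩)
        · cases h; exact hf
        · cases h
  | a Y Z =>
      rw [hUC, UCat_a]
      constructor
      · intro h; exact Or.inr ⟨Y, Z, rfl, h.1, h.2⟩
      · rintro (⟨Y', h, -⟩ | ⟨Y', Z', h, h1, h2⟩)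
        · cases h
        · cases h; exact ⟨h1, h2⟩
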